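/- Let B be a finite skew brace whose additive group (B,+) is nilpotent. Then for every prime p dividing |B|, there exists a subbrace of B of order p. -/

import Mathlib

class SkewBrace (B : Type*) extends Group B, AddGroup B where
  one_eq_zero : (1 : B) = 0
  left_compat : ∀ a b c : B, a * (b + c) = a * b - a + a * c

namespace SkewBraceAux

/-- In a finite nilpotent group, for every prime `p` dividing the order there is a
central element `g` with `g ^ p = 1` and `g ≠ 1`. -/
lemma central_of_order_p {G : Type*} [Group G] [Finite G]
    (hnil : Group.IsNilpotent G) {p : ℕ} (hp : Fact p.Prime) (hdvd : p ∣ Nat.card G) :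
    ∃ g : G, g ∈ Subgroup.center G ∧ g ^ p = 1 ∧ g ≠ 1 := by
  classical
  obtain ⟨e⟩ := ((isNilpotent_of_finite_tfae (G := G)).out 0 4).mp hnil
  have key : ∀ P : Sylow p G, ∃ w : ↥(P : Subgroup G),
      w ∈ Subgroup.center ↥(P : Subgroup G) ∧ w ^ p = 1 ∧ w ≠ 1 := by
    intro P
    have hcard : Nat.card ↥(P : Subgroup G) = p ^ (Nat.card G).factorization p :=
      P.card_eq_multiplicity
    have hfpos : 0 < (Nat.card G).factorization p :=
      Nat.Prime.factorization_pos_of_dvd hp.out (Nat.card_pos.ne') hdvd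
    have hnt : Nontrivial ↥(P : Subgroup G) := by
      rw [← Finite.one_lt_card_iff_nontrivial, hcard]
      exact Nat.one_lt_pow hfpos.ne' hp.out.one_lt
    have hcent := P.isPGroup'.center_nontrivial
    obtain ⟨z, hzne⟩ := exists_ne (1 : Subgroup.center ↥(P : Subgroup G))
    obtain ⟨n, hn⟩ := P.isPGroup' (z : ↥(P : Subgroup G))
    have hzne' : (z : ↥(P : Subgroup G)) ≠ 1 := fun h => hzne (Subtype.ext h)
    obtain ⟨m, hmle, hm⟩ := (Nat.dvd_prime_pow hp.out).mp (orderOf_dvd_of_pow_eq_one hn)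
    have hm1 : m ≠ 0 := by
      rintro rfl
      rw [pow_zero, orderOf_eq_one_iff] at hm
      exact hzne' hm
    refine ⟨(z : ↥(P : Subgroup G)) ^ p ^ (m - 1), Subgroup.pow_mem _ z.2 _, ?_, ?_⟩
    · rw [← pow_mul, ← pow_succ, Nat.sub_add_cancel (Nat.one_le_iff_ne_zero.mpr hm1), ← hm,
        pow_orderOf_eq_one]
    · intro h
      have : orderOf (z : ↥(P : Subgroup G)) ∣ p ^ (m - 1) := orderOf_dvd_of_pow_eq_one h
      rw [hm] at this
      have := Nat.pow_dvd_pow_iff_le_right hp.out.one_lt |>.mp this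
      omega
  choose w hwc hwp hwne using key
  have hps : p ∈ (Nat.card G).primeFactors :=
    Nat.mem_primeFactors.mpr ⟨hp.out, hdvd, Nat.card_pos.ne'⟩
  set p' : (Nat.card G).primeFactors := ⟨p, hps⟩ with hp'
  let f : ∀ q : (Nat.card G).primeFactors, ∀ P : Sylow (q : ℕ) G, ↥(P : Subgroup G) :=
    Pi.mulSingle p' w
  have hf1 : f ≠ 1 := by
    intro h
    obtain ⟨P₀⟩ : Nonempty (Sylow p G) := inferInstance
    have := congrFun (congrFun h p') P₀
    simp only [f, Pi.mulSingle_eq_same, Pi.one_apply] at this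
    exact hwne P₀ this
  have hfp : f ^ p = 1 := by
    have : f ^ p = Pi.mulSingle p' (w ^ p) :=
      (Pi.mulSingle_pow (f := fun q : (Nat.card G).primeFactors =>
        ∀ P : Sylow (q : ℕ) G, ↥(P : Subgroup G)) p' w p).symm
    rw [this]
    have : w ^ p = 1 := by
      funext P
      exact hwp P
    rw [this, Pi.mulSingle_one]
  have hfc : ∀ h, h * f = f * h := by
    intro h
    funext q
    rcases eq_or_ne q p' with rfl | hq
    · funext P
      simp only [Pi.mul_apply, f, Pi.mulSingle_eq_same]
      exact Subgroup.mem_center_iff.mp (hwc P) _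
    · funext P
      simp only [Pi.mul_apply, f, Pi.mulSingle_eq_of_ne hq, Pi.one_apply, one_mul, mul_one]
  refine ⟨e f, Subgroup.mem_center_iff.mpr fun y => ?_, ?_, ?_⟩
  · obtain ⟨y', rfl⟩ := e.surjective y
    rw [← map_mul, ← map_mul, hfc]
  · rw [← map_pow, hfp, map_one]
  · intro h
    exact hf1 (e.injective (by rw [h, map_one]))

variable {B : Type*} [SkewBrace B]

lemma mul_zero' (a : B) : a * (0 : B) = a := by
  have h := SkewBrace.left_compat a 0 0
  rw [add_zero] at h
  have : (0 : B) + a * 0 = a * 0 - a + a * 0 := by rw [zero_add]; exact h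
  have h2 := add_right_cancel this
  rw [eq_comm, sub_eq_zero] at h2
  exact h2

/-- The lambda map of the skew brace, as an additive homomorphism. -/
def lam (a : B) : B →+ B :=
  AddMonoidHom.mk' (fun b => -a + a * b) (by
    intro b c
    show -a + a * (b + c) = (-a + a * b) + (-a + a * c)
    rw [SkewBrace.left_compat, sub_eq_add_neg]
    simp [add_assoc])

lemma lam_apply (a b : B) : lam a b = -a + a * b := rfl

lemma mul_eq_add_lam (a b : B) : a * b = a + lam a b := by
  rw [lam_apply, add_neg_cancel_left]

lemma lam_one_apply (b : B) : lam (1 : B) b = b := by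
  rw [lam_apply, one_mul, SkewBrace.one_eq_zero, neg_zero, zero_add]

lemma mul_neg' (a b : B) : a * (-b) = a - a * b + a := by
  have h := SkewBrace.left_compat a b (-b)
  rw [add_neg_cancel, mul_zero'] at h
  refine add_left_cancel (a := a * b - a) ?_
  rw [← h]
  simp [sub_eq_add_neg, add_assoc]

lemma lam_mul_apply (a b c : B) : lam (a * b) c = lam a (lam b c) := by
  rw [lam_apply, lam_apply, lam_apply, SkewBrace.left_compat, mul_neg']
  simp only [sub_eq_add_neg, neg_add_rev, neg_neg]
  simp [add_assoc, mul_assoc]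

lemma lam_injective (a : B) : Function.Injective (lam a) := by
  intro x y h
  rw [lam_apply, lam_apply] at h
  exact mul_left_cancel (add_left_cancel h)

lemma lam_bijective [Finite B] (a : B) : Function.Bijective (lam a) :=
  (Finite.injective_iff_bijective).mp (lam_injective a)

end SkewBraceAux

open SkewBraceAux

theorem skewBrace_cauchy_of_nilpotent_add {B : Type*} [SkewBrace B] [Fintype B]
    (hnil : Group.IsNilpotent (Multiplicative B)) :
    ∀ p : ℕ, p.Prime → p ∣ Nat.card B →
      ∃ (A : AddSubgroup B) (M : Subgroup B),
        (A : Set B) = (M : Set B) ∧ Nat.card A = p := by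
  classical
  intro p hp hdvd
  haveI hfp : Fact p.Prime := ⟨hp⟩
  -- a central (additively) element x₀ of additive order p
  have hdvd' : p ∣ Nat.card (Multiplicative B) := by
    rwa [Nat.card_congr Multiplicative.toAdd]
  obtain ⟨g, hgc, hgp, hgne⟩ := central_of_order_p hnil ⟨hp⟩ hdvd'
  set x₀ : B := Multiplicative.toAdd g with hx₀
  have hx₀c : x₀ ∈ AddSubgroup.center B := by
    rw [AddSubgroup.mem_center_iff]
    intro b
    exact Subgroup.mem_center_iff.mp hgc (Multiplicative.ofAdd b)
  have hx₀p : p • x₀ = 0 := by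
    rw [hx₀, ← toAdd_pow, hgp, toAdd_one]
  have hx₀ne : x₀ ≠ 0 := fun h => hgne h
  -- the subbrace Ω of p-torsion central elements
  set S : Set B := {x | x ∈ AddSubgroup.center B ∧ p • x = 0} with hS
  let Ω : AddSubgroup B :=
    { carrier := S
      zero_mem' := ⟨AddSubgroup.zero_mem _, smul_zero p⟩
      add_mem' := by
        rintro a b ⟨hac, hap⟩ ⟨hbc, hbp⟩
        refine ⟨AddSubgroup.add_mem _ hac hbc, ?_⟩
        have hcomm : AddCommute a b := AddSubgroup.mem_center_iff.mp hbc a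
        rw [hcomm.add_nsmul, hap, hbp, add_zero]
      neg_mem' := by
        rintro a ⟨hac, hap⟩
        exact ⟨AddSubgroup.neg_mem _ hac, by rw [neg_nsmul, hap, neg_zero]⟩ }
  have memΩ : ∀ {x : B}, x ∈ Ω ↔ x ∈ AddSubgroup.center B ∧ p • x = 0 := Iff.rfl
  have lam_mem : ∀ (a : B) {x : B}, x ∈ Ω → lam a x ∈ Ω := by
    intro a x hx
    obtain ⟨hxc, hxp⟩ := memΩ.mp hx
    refine memΩ.mpr ⟨?_, ?_⟩
    · rw [AddSubgroup.mem_center_iff]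
      intro b
      obtain ⟨c, rfl⟩ := (lam_bijective a).surjective b
      rw [← map_add, ← map_add, AddSubgroup.mem_center_iff.mp hxc c]
    · rw [← map_nsmul, hxp, map_zero]
  -- the same set is a multiplicative subgroup
  have add_mem_S : ∀ {a b : B}, a ∈ Ω → b ∈ Ω → a + b ∈ Ω := fun ha hb =>
    AddSubgroup.add_mem _ ha hb
  have mul_mem_S : ∀ {a b : B}, a ∈ Ω → b ∈ Ω → a * b ∈ Ω := by
    intro a b ha hb
    rw [mul_eq_add_lam]
    exact add_mem_S ha (lam_mem a hb)
  have one_mem_S : (1 : B) ∈ Ω := by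
    rw [SkewBrace.one_eq_zero]; exact AddSubgroup.zero_mem _
  have pow_mem_S : ∀ {a : B}, a ∈ Ω → ∀ n : ℕ, a ^ n ∈ Ω := by
    intro a ha n
    induction n with
    | zero => rw [pow_zero]; exact one_mem_S
    | succ n ih => rw [pow_succ]; exact mul_mem_S ih ha
  have inv_mem_S : ∀ {a : B}, a ∈ Ω → a⁻¹ ∈ Ω := by
    intro a ha
    have hpos : 0 < orderOf a := orderOf_pos a
    have hinv : a⁻¹ = a ^ (orderOf a - 1) := by
      refine inv_eq_of_mul_eq_one_right ?_
      rw [← pow_succ', Nat.sub_add_cancel hpos, pow_orderOf_eq_one]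
    rw [hinv]
    exact pow_mem_S ha _
  let M₀ : Subgroup B :=
    { carrier := S
      one_mem' := one_mem_S
      mul_mem' := fun ha hb => mul_mem_S ha hb
      inv_mem' := fun ha => inv_mem_S ha }
  have memM₀ : ∀ {x : B}, x ∈ M₀ ↔ x ∈ Ω := Iff.rfl
  -- cardinalities
  have hcard_eq : Nat.card ↥M₀ = Nat.card ↥Ω :=
    Nat.card_congr ⟨fun x => ⟨x.1, x.2⟩, fun x => ⟨x.1, x.2⟩, fun _ => rfl, fun _ => rfl⟩
  have hx₀Ω : x₀ ∈ Ω := memΩ.mpr ⟨hx₀c, hx₀p⟩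
  have hΩnt : Nontrivial ↥Ω :=
    ⟨⟨⟨x₀, hx₀Ω⟩, 0, fun h => hx₀ne (by simpa [Subtype.ext_iff] using h)⟩⟩
  obtain ⟨k, hk⟩ : ∃ k, Nat.card ↥Ω = p ^ k := by
    refine ⟨_, Nat.eq_prime_pow_of_unique_prime_dvd Nat.card_pos.ne' ?_⟩
    intro q hq hqd
    haveI : Fact q.Prime := ⟨hq⟩
    haveI : Fintype ↥Ω := Fintype.ofFinite _
    rw [Nat.card_eq_fintype_card] at hqd
    obtain ⟨y, hy⟩ := exists_prime_addOrderOf_dvd_card q hqd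
    have hyp : p • y = 0 := by
      have h1 : p • (y : B) = 0 := (memΩ.mp y.2).2
      exact Subtype.ext h1
    have hqp : q ∣ p := by
      rw [← hy]
      exact addOrderOf_dvd_of_nsmul_eq_zero hyp
    exact (Nat.prime_dvd_prime_iff_eq hq hp).mp hqp
  have hk1 : k ≠ 0 := by
    rintro rfl
    rw [pow_zero] at hk
    exact (Finite.one_lt_card_iff_nontrivial.mpr hΩnt).ne' hk
  have hpdvdΩ : p ∣ Nat.card ↥Ω := by
    rw [hk]
    exact dvd_pow_self p hk1
  have hPG : IsPGroup p ↥M₀ := IsPGroup.of_card (hcard_eq.trans hk)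
  -- the action of (Ω, ·) on Ω by lambda
  letI : MulAction ↥M₀ ↥Ω :=
    { smul := fun a x => ⟨lam (a : B) (x : B), lam_mem _ x.2⟩
      one_smul := fun x => Subtype.ext (lam_one_apply (x : B))
      mul_smul := fun a b x => Subtype.ext (lam_mul_apply (a : B) (b : B) (x : B)) }
  have smul_def : ∀ (a : ↥M₀) (x : ↥Ω), ((@HSMul.hSMul _ _ _ (@instHSMul _ _ (‹MulAction ↥M₀ ↥Ω›).toSMul) a x : ↥Ω) : B) = lam (a : B) (x : B) :=
    fun _ _ => rfl
  have hmod := hPG.card_modEq_card_fixedPoints ↥Ω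
  have hpdvd_fix : p ∣ Nat.card (MulAction.fixedPoints ↥M₀ ↥Ω) :=
    (Nat.modEq_zero_iff_dvd).mp ((hmod.symm.trans (Nat.modEq_zero_iff_dvd.mpr hpdvdΩ)))
  have h0fix : (0 : ↥Ω) ∈ MulAction.fixedPoints ↥M₀ ↥Ω := by
    intro a
    refine Subtype.ext ?_
    rw [smul_def]
    exact map_zero (lam (a : B))
  have hfix_nt : Nontrivial ↥(MulAction.fixedPoints ↥M₀ ↥Ω) := by
    rw [← Finite.one_lt_card_iff_nontrivial]
    have hpos : 0 < Nat.card ↥(MulAction.fixedPoints ↥M₀ ↥Ω) :=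
      Nat.card_pos_iff.mpr ⟨⟨⟨0, h0fix⟩⟩, inferInstance⟩
    have : p ≤ Nat.card ↥(MulAction.fixedPoints ↥M₀ ↥Ω) :=
      Nat.le_of_dvd hpos hpdvd_fix
    have := hp.one_lt
    omega
  obtain ⟨y, hyne⟩ := exists_ne (⟨0, h0fix⟩ : ↥(MulAction.fixedPoints ↥M₀ ↥Ω))
  set x : B := ((y : ↥Ω) : B) with hxdef
  have hxΩ : x ∈ Ω := (y : ↥Ω).2
  have hxne : x ≠ 0 := by
    intro h
    apply hyne
    apply Subtype.ext
    apply Subtype.ext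
    exact h
  have hx_fix : ∀ a : B, a ∈ Ω → lam a x = x := by
    intro a ha
    have := y.2 (⟨a, memM₀.mpr ha⟩ : ↥M₀)
    have h2 := congrArg (Subtype.val : ↥Ω → B) this
    rw [smul_def] at h2
    exact h2
  have hxp : p • x = 0 := (memΩ.mp hxΩ).2
  have haddord : addOrderOf x = p := by
    have h1 : addOrderOf x ∣ p := addOrderOf_dvd_of_nsmul_eq_zero hxp
    rcases (Nat.dvd_prime hp).mp h1 with h | h
    · exact absurd (AddMonoid.addOrderOf_eq_one_iff.mp h) hxne
    · exact h
  -- the subbrace generated by x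
  set A : AddSubgroup B := AddSubgroup.zmultiples x with hA
  have hcardA : Nat.card ↥A = p := by rw [hA, Nat.card_zmultiples, haddord]
  have hA_sub : ∀ {b : B}, b ∈ A → b ∈ Ω := by
    intro b hb
    obtain ⟨n, rfl⟩ := AddSubgroup.mem_zmultiples_iff.mp hb
    exact AddSubgroup.zsmul_mem _ hxΩ n
  have hA_fix : ∀ {a b : B}, a ∈ A → b ∈ A → lam a b = b := by
    intro a b ha hb
    obtain ⟨n, rfl⟩ := AddSubgroup.mem_zmultiples_iff.mp hb
    rw [map_zsmul, hx_fix a (hA_sub ha)]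
  have hA_mul : ∀ {a b : B}, a ∈ A → b ∈ A → a * b = a + b := by
    intro a b ha hb
    rw [mul_eq_add_lam, hA_fix ha hb]
  let M : Subgroup B :=
    { carrier := (A : Set B)
      one_mem' := by
        show (1 : B) ∈ A
        rw [SkewBrace.one_eq_zero]
        exact AddSubgroup.zero_mem _
      mul_mem' := by
        intro a b ha hb
        show a * b ∈ A
        rw [hA_mul ha hb]
        exact AddSubgroup.add_mem _ ha hb
      inv_mem' := by
        intro a ha
        show a⁻¹ ∈ A
        have hna : -a ∈ A := AddSubgroup.neg_mem _ ha
        have : a * (-a) = 1 := by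
          rw [hA_mul ha hna, add_neg_cancel, SkewBrace.one_eq_zero]
        rw [inv_eq_of_mul_eq_one_right this]
        exact hna }
  exact ⟨A, M, rfl, hcardA⟩
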